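/- Let G be a graph with a proper k-colouring φ, and suppose V(G) is partitioned into 2d independent-set classes paired as (V^{1,1},V^{1,2}),…,(V^{d,1},V^{d,2}). Define ψ on each vertex v by appending to {φ-colour} a new label depending on its class as in the Kostochka–Nešetřil blowup argument. If G is obtained from a graph H by blowing up vertices in classes other than V^{d,2} into t copies and vertices of V^{d,2} into t+1 copies, and H requires at least 2(t+1)d colours in any (t+1)-fold colouring, then k ≥ 2td + 1. -/

import Mathlib

/-- The blowup of `H` with `n v` copies of each vertex `v`: the copies of a vertex
form a clique, and all copies of adjacent vertices are adjacent. -/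
def mixedBlowup {V : Type*} (H : SimpleGraph V) (n : V → ℕ) :
    SimpleGraph (Σ v : V, Fin (n v)) where
  Adj x y := H.Adj x.1 y.1 ∨ (x.1 = y.1 ∧ x ≠ y)
  symm := by
    constructor
    rintro x y (h | ⟨h1, h2⟩)
    · exact Or.inl h.symm
    · exact Or.inr ⟨h1.symm, h2.symm⟩
  loopless := by constructor; rintro x (h | ⟨_, h2⟩); exacts [H.loopless.irrefl _ h, h2 rfl]

/-- Kostochka–Nešetřil-style blowup argument. If `V(H)` is
partitioned into `2d` independent classes, `G` is the blowup of `H` with `t+1`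
copies on the class `(d−1, 1)` and `t` copies elsewhere, and every `(t+1)`-fold
colouring of `H` uses at least `2(t+1)d` colours, then any proper `k`-colouring
of the blowup has `k ≥ 2td + 1`. -/
theorem blowup_coloring_lower_bound {V : Type*} [Fintype V]
    (H : SimpleGraph V) (d t k : ℕ) (hd : 0 < d)
    (c : V → Fin d × Fin 2)
    (hindep : ∀ u v, H.Adj u v → c u ≠ c v)
    (n : V → ℕ)
    (hn : ∀ v, n v = if c v = (⟨d - 1, by omega⟩, 1) then t + 1 else t)
    (hH : ∀ ψ : V → Finset ℕ, (∀ v, (ψ v).card = t + 1) →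
      (∀ u v, H.Adj u v → Disjoint (ψ u) (ψ v)) →
      2 * (t + 1) * d ≤ (Finset.univ.biUnion ψ).card)
    (φ : (Σ v : V, Fin (n v)) → Fin k)
    (hφ : ∀ x y, (mixedBlowup H n).Adj x y → φ x ≠ φ y) :
    2 * t * d + 1 ≤ k := by

  classical
  set sp : Fin d × Fin 2 := (⟨d - 1, by omega⟩, 1) with hsp
  let idx : Fin d × Fin 2 → ℕ := fun p => 2 * p.1.1 + p.2.1
  have hidx_inj : ∀ p q : Fin d × Fin 2, idx p = idx q → p = q := by
    rintro ⟨⟨a, ha⟩, ⟨b, hb⟩⟩ ⟨⟨a', ha'⟩, ⟨b', hb'⟩⟩ h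
    simp only [idx] at h
    simp only [Prod.ext_iff, Fin.ext_iff]
    omega
  have hidx_sp : ∀ p : Fin d × Fin 2, p ≠ sp → idx p < 2 * d - 1 := by
    rintro ⟨⟨a, ha⟩, ⟨b, hb⟩⟩ hp
    simp only [idx]
    by_contra h
    apply hp
    simp only [hsp, Prod.ext_iff, Fin.ext_iff]
    omega
  let img : V → Finset ℕ := fun v => Finset.univ.image (fun i : Fin (n v) => (φ ⟨v, i⟩ : ℕ))
  let ψ : V → Finset ℕ := fun v => img v ∪ (if c v = sp then ∅ else {k + idx (c v)})
  have himg_lt : ∀ v x, x ∈ img v → x < k := by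
    intro v x hx
    simp only [img, Finset.mem_image, Finset.mem_univ, true_and] at hx
    obtain ⟨i, hi⟩ := hx
    exact hi ▸ (φ ⟨v, i⟩).2
  have himg_card : ∀ v, (img v).card = n v := by
    intro v
    rw [show (img v).card = _ from Finset.card_image_of_injective _ ?_,
      Finset.card_univ, Fintype.card_fin]
    intro i j hij
    by_contra hne
    exact hφ ⟨v, i⟩ ⟨v, j⟩ (Or.inr ⟨rfl, by simp [hne]⟩) (Fin.ext hij)
  have hcard : ∀ v, (ψ v).card = t + 1 := by
    intro v
    by_cases hv : c v = sp
    · rw [show ψ v = img v by simp [ψ, hv], himg_card, hn v, if_pos hv]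
    · have hdisj : Disjoint (img v) {k + idx (c v)} := by
        rw [Finset.disjoint_singleton_right]
        intro hmem
        exact absurd (himg_lt v _ hmem) (by omega)
      simp only [ψ, if_neg hv]
      rw [Finset.card_union_of_disjoint hdisj, himg_card, Finset.card_singleton, hn v]
      rw [if_neg hv]
  have hdisjoint : ∀ u v, H.Adj u v → Disjoint (ψ u) (ψ v) := by
    intro u v huv
    have hcuv : c u ≠ c v := hindep u v huv
    rw [Finset.disjoint_left]
    intro x hxu hxv
    simp only [ψ, Finset.mem_union] at hxu hxv
    have hdum : ∀ w, x ∈ (if c w = sp then (∅ : Finset ℕ) else {k + idx (c w)}) →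
        x = k + idx (c w) := by
      intro w hw
      split at hw
      · simp at hw
      · simpa using hw
    rcases hxu with hxu | hxu <;> rcases hxv with hxv | hxv
    · simp only [img, Finset.mem_image, Finset.mem_univ, true_and] at hxu hxv
      obtain ⟨i, hi⟩ := hxu
      obtain ⟨j, hj⟩ := hxv
      exact hφ ⟨u, i⟩ ⟨v, j⟩ (Or.inl huv) (Fin.ext (hi.trans hj.symm))
    · have := himg_lt u x hxu
      have := hdum v hxv
      omega
    · have := himg_lt v x hxv
      have := hdum u hxu
      omega
    · have h1 := hdum u hxu
      have h2 := hdum v hxv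
      exact hcuv (hidx_inj _ _ (by omega))
  have hsub : Finset.univ.biUnion ψ ⊆ Finset.range (k + (2 * d - 1)) := by
    intro x hx
    simp only [Finset.mem_biUnion, Finset.mem_univ, true_and] at hx
    obtain ⟨v, hv⟩ := hx
    rw [Finset.mem_range]
    simp only [ψ, Finset.mem_union] at hv
    rcases hv with hv | hv
    · have := himg_lt v x hv
      omega
    · split at hv
      · simp at hv
      · next h =>
        simp only [Finset.mem_singleton] at hv
        have := hidx_sp (c v) h
        omega
  have hle := (hH ψ hcard hdisjoint).trans
    ((Finset.card_le_card hsub).trans_eq (Finset.card_range _))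
  have hm : 2 * (t + 1) * d = 2 * (t * d) + 2 * d := by ring
  have hg : 2 * t * d = 2 * (t * d) := by ring
  rw [hm] at hle
  rw [hg]
  omega
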